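/- Let Δ be a set of linear clauses and U a set of affine equations. Let U∗ and U∗′ be two possible final unit sets obtained by repeatedly applying unit propagation on clauses of Δ starting from U (each run continuing until 𝟏 is deduced or no clause of Δ permits any further propagation). Then either 𝟏 ∈ span(U∗) and 𝟏 ∈ span(U∗′), or span(U∗) = span(U∗′). -/

import Mathlib

namespace XorSAT

/-- An affine equation over `n` Boolean variables: the coefficients of the `n`
variables together with a right-hand side, i.e. a vector in `F₂^(n+1)`. -/
abbrev Eqn (n : ℕ) : Type := (Fin n → ZMod 2) × ZMod 2

/-- The equation `𝟏`, i.e. `0 = 1`, satisfied by no assignment. -/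
def oneEq (n : ℕ) : Eqn n := (0, 1)

/-- An assignment `x` satisfies the equation `(a, b)` iff `∑ aᵢ xᵢ = b`. -/
def Sats {n : ℕ} (x : Fin n → ZMod 2) (e : Eqn n) : Prop :=
  (∑ i, e.1 i * x i) = e.2

/-- A linear clause: a (finite) disjunction of affine equations. -/
abbrev Clause (n : ℕ) : Type := Finset (Eqn n)

/-- An assignment satisfies a linear clause iff it satisfies some equation in it. -/
def SatsClause {n : ℕ} (x : Fin n → ZMod 2) (C : Clause n) : Prop :=
  ∃ e ∈ C, Sats x e

/-- A clause is non-tautological if some assignment falsifies every equation of it. -/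
def NonTaut {n : ℕ} (C : Clause n) : Prop :=
  ∃ x : Fin n → ZMod 2, ∀ e ∈ C, ¬ Sats x e

/-- The linear negation `⟨C⟩` of a clause `C = f₁ ∨ … ∨ f_m`:
the `F₂`-span of `f₁ + 𝟏, …, f_m + 𝟏`. -/
def linneg {n : ℕ} (C : Clause n) : Submodule (ZMod 2) (Eqn n) :=
  Submodule.span (ZMod 2) ((fun e => e + oneEq n) '' (C : Set (Eqn n)))

/-- A set of equations is consistent if some assignment satisfies all of them. -/
def Consistent {n : ℕ} (U : Set (Eqn n)) : Prop :=
  ∃ x : Fin n → ZMod 2, ∀ e ∈ U, Sats x e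

/-- The `F₂`-linear span of a set of equations, as a submodule. -/
def spn {n : ℕ} (U : Set (Eqn n)) : Submodule (ZMod 2) (Eqn n) :=
  Submodule.span (ZMod 2) U


/-- Unit propagation on clause `C` from units `U` may deduce the equation `f`. -/
def CanDeduce {n : ℕ} (U : Set (Eqn n)) (C : Clause n) (f : Eqn n) : Prop :=
  ¬ linneg C ≤ spn U ∧ linneg C ≤ spn (insert (f + oneEq n) U) ∧
    f ∉ spn U ∧ f + oneEq n ∉ spn U

/-- One step of unit propagation on the clause set `Δ`: a clause `C ∈ Δ` either
deduces the contradiction `𝟏` (if `⟨C⟩ ⊆ span U`) or deduces some equation `f`. -/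
def UPStep {n : ℕ} (Δ : Set (Clause n)) (U U' : Set (Eqn n)) : Prop :=
  Consistent U ∧ ∃ C ∈ Δ,
    (linneg C ≤ spn U ∧ U' = insert (oneEq n) U) ∨
    (∃ f, CanDeduce U C f ∧ U' = insert f U)

/-- A (finite) run of unit propagation on the clause set `Δ`. -/
def UPRun {n : ℕ} (Δ : Set (Clause n)) : Set (Eqn n) → Set (Eqn n) → Prop :=
  Relation.ReflTransGen (UPStep Δ)

/-- The units `V` are conflict-like w.r.t. `Δ`: some run of unit propagation
starting from `V` and using clauses of `Δ` deduces `𝟏`. -/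
def ConflictLike {n : ℕ} (Δ : Set (Clause n)) (V : Set (Eqn n)) : Prop :=
  ∃ W, UPRun Δ V W ∧ oneEq n ∈ W

/-- The decomposition `(V', f)` is absorbed by `Δ`: unit propagation from units `V'`
with clauses `Δ` either derives `𝟏` or derives a unit set whose span contains `f + 𝟏`. -/
def Absorbed {n : ℕ} (Δ : Set (Clause n)) (V' : Set (Eqn n)) (f : Eqn n) : Prop :=
  ∃ W, UPRun Δ V' W ∧ (oneEq n ∈ W ∨ f + oneEq n ∈ spn W)

/-- Unit propagation on the clause `C` from units `U` results in some
propagation (deducing `𝟏` or deducing some equation). -/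
def CanPropagate {n : ℕ} (U : Set (Eqn n)) (C : Clause n) : Prop :=
  linneg C ≤ spn U ∨ ∃ f, CanDeduce U C f

/-- No clause of `Δ` causes any propagation from `U`. -/
def UPStuck {n : ℕ} (Δ : Set (Clause n)) (U : Set (Eqn n)) : Prop :=
  ∀ U', ¬ UPStep Δ U U'

/-- A completed run of unit propagation on `Δ` starting from `U`: it proceeds
until `𝟏` is deduced or no clause of `Δ` permits any further propagation. -/
def UPFinal {n : ℕ} (Δ : Set (Clause n)) (U V : Set (Eqn n)) : Prop :=
  UPRun Δ U V ∧ (oneEq n ∈ V ∨ UPStuck Δ V)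


lemma zmod2_add_eq_zero : ∀ a b : ZMod 2, a + b = 0 ↔ a = b := by decide
lemma zmod2_ne_zero : ∀ a : ZMod 2, a ≠ 0 → a = 1 := by decide

def evalMap {n : ℕ} (x : Fin n → ZMod 2) : Eqn n →ₗ[ZMod 2] ZMod 2 where
  toFun e := (∑ i, e.1 i * x i) + e.2
  map_add' e f := by
    simp [add_mul, Finset.sum_add_distrib]
    ring
  map_smul' c e := by
    simp [Finset.mul_sum, mul_assoc, mul_add]

lemma eqn_decomp {n : ℕ} (e : Eqn n) :
    e = (∑ i, e.1 i • ((Pi.single i 1 : Fin n → ZMod 2), (0 : ZMod 2))) + e.2 • oneEq n := by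
  ext j
  · simp [Prod.fst_sum, Finset.sum_apply, Pi.single_apply, oneEq, mul_comm]
  · simp [Prod.snd_sum, oneEq]

lemma consistent_of_notMem {n : ℕ} (U : Set (Eqn n)) (h : oneEq n ∉ spn U) : Consistent U := by
  have hv : (spn U).mkQ (oneEq n) ≠ 0 := by
    simpa [Submodule.Quotient.mk_eq_zero] using h
  have : ¬ ∀ φ : Module.Dual (ZMod 2) (Eqn n ⧸ spn U), φ ((spn U).mkQ (oneEq n)) = 0 := by
    rw [Module.forall_dual_apply_eq_zero_iff]; exact hv
  obtain ⟨φ, hφ⟩ := not_forall.mp this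
  set ψ := φ.comp (spn U).mkQ with hψ
  have hψone : ψ (oneEq n) = 1 := zmod2_ne_zero _ hφ
  refine ⟨fun i => ψ ((Pi.single i 1 : Fin n → ZMod 2), 0), fun e he => ?_⟩
  have he0 : ψ e = 0 := by
    simp [hψ, LinearMap.comp_apply, (Submodule.Quotient.mk_eq_zero (spn U)).mpr (Submodule.subset_span he)]
  have hdec := eqn_decomp e
  rw [Sats, ← zmod2_add_eq_zero]
  calc (∑ i, e.1 i * ψ ((Pi.single i 1 : Fin n → ZMod 2), 0)) + e.2
      = ψ e := by
        conv_rhs => rw [hdec]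
        simp only [map_add, map_sum, map_smul, smul_eq_mul, hψone, mul_one]
    _ = 0 := he0

lemma spn_insert {n : ℕ} (g : Eqn n) (W : Set (Eqn n)) :
    spn (insert g W) = Submodule.span (ZMod 2) {g} ⊔ spn W := by
  simpa [spn] using Submodule.span_insert g W

lemma stepPreserve {n : ℕ} {Δ : Set (Clause n)} {V U U' : Set (Eqn n)}
    (h1 : oneEq n ∉ spn V) (hstuck : UPStuck Δ V) (hUV : spn U ≤ spn V)
    (hstep : UPStep Δ U U') : spn U' ≤ spn V := by
  have hcons : Consistent V := consistent_of_notMem V h1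
  obtain ⟨hcU, C, hCΔ, hcase⟩ := hstep
  have hCV : ¬ linneg C ≤ spn V := fun hle =>
    hstuck _ ⟨hcons, C, hCΔ, Or.inl ⟨hle, rfl⟩⟩
  rcases hcase with ⟨hle, rfl⟩ | ⟨f, ⟨hd1, hd2, hd3, hd4⟩, rfl⟩
  · exact absurd (hle.trans hUV) hCV
  · have hfV : f ∈ spn V := by
      by_contra hf
      have hf1V : f + oneEq n ∈ spn V := by
        by_contra hg
        refine hstuck _ ⟨hcons, C, hCΔ, Or.inr ⟨f, ⟨hCV, ?_, hf, hg⟩, rfl⟩⟩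
        rw [spn_insert] at hd2 ⊢
        exact hd2.trans (sup_le_sup_left hUV _)
      apply hCV
      rw [spn_insert] at hd2
      refine hd2.trans (sup_le ?_ hUV)
      simpa [Submodule.span_le] using hf1V
    rw [spn_insert]
    exact sup_le (by simpa [Submodule.span_le] using hfV) hUV

lemma runPreserve {n : ℕ} {Δ : Set (Clause n)} {V A B : Set (Eqn n)}
    (h1 : oneEq n ∉ spn V) (hstuck : UPStuck Δ V)
    (hAV : spn A ≤ spn V) (hrun : UPRun Δ A B) : spn B ≤ spn V := by
  induction hrun with
  | refl => exact hAV
  | tail hr hs ih => exact stepPreserve h1 hstuck ih hs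

lemma runSubset {n : ℕ} {Δ : Set (Clause n)} {A B : Set (Eqn n)}
    (h : UPRun Δ A B) : A ⊆ B := by
  induction h with
  | refl => exact subset_rfl
  | tail hr hs ih =>
    refine ih.trans ?_
    obtain ⟨_, C, _, hc⟩ := hs
    rcases hc with ⟨_, rfl⟩ | ⟨f, _, rfl⟩ <;> exact Set.subset_insert _ _

/-- Unit propagation on a clause set has a unique fixed point up
to span: any two completed runs from the same starting units either both contain
`𝟏` in their span, or have equal spans. -/
theorem stmt9 {n : ℕ} (Δ : Set (Clause n)) (U U₁ U₂ : Set (Eqn n))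
    (h1 : UPFinal Δ U U₁) (h2 : UPFinal Δ U U₂) :
    (oneEq n ∈ spn U₁ ∧ oneEq n ∈ spn U₂) ∨ spn U₁ = spn U₂ := by
  obtain ⟨r1, hf1⟩ := h1
  obtain ⟨r2, hf2⟩ := h2
  have hsub1 : spn U ≤ spn U₁ := Submodule.span_mono (runSubset r1)
  have hsub2 : spn U ≤ spn U₂ := Submodule.span_mono (runSubset r2)
  by_cases m1 : oneEq n ∈ spn U₁ <;> by_cases m2 : oneEq n ∈ spn U₂
  · exact Or.inl ⟨m1, m2⟩
  · have hstuck2 : UPStuck Δ U₂ := by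
      rcases hf2 with h | h
      · exact absurd (Submodule.subset_span h) m2
      · exact h
    exact absurd (runPreserve m2 hstuck2 hsub2 r1 m1) m2
  · have hstuck1 : UPStuck Δ U₁ := by
      rcases hf1 with h | h
      · exact absurd (Submodule.subset_span h) m1
      · exact h
    exact absurd (runPreserve m1 hstuck1 hsub1 r2 m2) m1
  · have hstuck1 : UPStuck Δ U₁ := by
      rcases hf1 with h | h
      · exact absurd (Submodule.subset_span h) m1
      · exact h
    have hstuck2 : UPStuck Δ U₂ := by
      rcases hf2 with h | h
      · exact absurd (Submodule.subset_span h) m2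
      · exact h
    exact Or.inr (le_antisymm (runPreserve m2 hstuck2 hsub2 r1)
      (runPreserve m1 hstuck1 hsub1 r2))

end XorSAT
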